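/- arXiv:2007.09081 — 2 statements merged into one kernel-verified Lean document; each statement's English description precedes it below -/
import Mathlib

section
/- For a strongly convex C² function F : ℝᵖ → ℝ, the minimizer of W ↦ α‖W − W̄‖² + F(W) converges to the (unique) minimizer of F as α → 0⁺, provided F has a minimizer. -/
/-- For a strongly convex `C²` function `F` with minimizer `W_F`, the minimizer `W_α` of
`W ↦ α‖W − W̄‖² + F(W)` converges to `W_F` as `α → 0⁺`. -/
theorem stmt_11 {p : ℕ} (μ : ℝ) (hμ : 0 < μ)
    (F : EuclideanSpace ℝ (Fin p) → ℝ)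
    (hF : ContDiff ℝ 2 F) (hsc : StrongConvexOn Set.univ μ F)
    (Wbar WF : EuclideanSpace ℝ (Fin p))
    (hWF : IsMinOn F Set.univ WF)
    (Wα : ℝ → EuclideanSpace ℝ (Fin p))
    (hWα : ∀ α : ℝ, 0 < α →
      IsMinOn (fun W => α * ‖W - Wbar‖ ^ 2 + F W) Set.univ (Wα α)) :
    Filter.Tendsto Wα (nhdsWithin 0 (Set.Ioi 0)) (nhds WF) := by
  have key : ∀ W, F WF + μ / 4 * ‖W - WF‖ ^ 2 ≤ F W := by
    intro W
    have h := hsc.2 (Set.mem_univ WF) (Set.mem_univ W)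
      (by norm_num : (0:ℝ) ≤ 1/2) (by norm_num : (0:ℝ) ≤ 1/2) (by norm_num)
    have hmin := isMinOn_iff.mp hWF ((1/2:ℝ) • WF + (1/2:ℝ) • W) (Set.mem_univ _)
    have hn : ‖WF - W‖ = ‖W - WF‖ := norm_sub_rev _ _
    have := hmin.trans h
    rw [hn] at this
    simp only [smul_eq_mul] at this
    nlinarith [this]
  set C : ℝ := ‖WF - Wbar‖ ^ 2 with hC
  have hC0 : 0 ≤ C := sq_nonneg _
  have hbound : ∀ α : ℝ, 0 < α → ‖Wα α - WF‖ ^ 2 ≤ 4 / μ * C * α := by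
    intro α hα
    have h1 := isMinOn_iff.mp (hWα α hα) WF (Set.mem_univ _)
    have h2 := key (Wα α)
    have h3 : 0 ≤ α * ‖Wα α - Wbar‖ ^ 2 := by positivity
    have h4 : μ / 4 * ‖Wα α - WF‖ ^ 2 ≤ C * α := by nlinarith
    have hpos : (0:ℝ) ≤ 4 / μ := by positivity
    calc ‖Wα α - WF‖ ^ 2 = 4 / μ * (μ / 4 * ‖Wα α - WF‖ ^ 2) := by
          field_simp
      _ ≤ 4 / μ * (C * α) := mul_le_mul_of_nonneg_left h4 hpos
      _ = 4 / μ * C * α := by ring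
  rw [tendsto_iff_norm_sub_tendsto_zero]
  apply squeeze_zero' (g := fun α => Real.sqrt (4 / μ * C * α))
  · filter_upwards with α using norm_nonneg _
  · filter_upwards [self_mem_nhdsWithin] with α (hα : α ∈ Set.Ioi 0)
    exact (Real.le_sqrt (norm_nonneg _) (mul_nonneg (mul_nonneg (by positivity) hC0) hα.le)).mpr (hbound α hα)
  · have : Filter.Tendsto (fun α : ℝ => Real.sqrt (4 / μ * C * α)) (nhds 0) (nhds 0) := by
      have hc : Continuous fun α : ℝ => Real.sqrt (4 / μ * C * α) :=
        Real.continuous_sqrt.comp (continuous_const.mul continuous_id)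
      have := hc.tendsto 0
      simpa using this
    exact this.mono_left nhdsWithin_le_nhds
end

section
/- If F is μ-strongly convex with minimizer W_F and W_α minimizes W ↦ α‖W − W̄‖² + F(W), then ‖W_α − W_F‖ ≤ (2α/μ)‖W̄ − W_F‖. -/
/-- If `F` is `μ`-strongly convex with minimizer `W_F` and `W_α` minimizes
`W ↦ α‖W − W̄‖² + F(W)`, then `‖W_α − W_F‖ ≤ (2α/μ)‖W̄ − W_F‖`. -/
theorem stmt_12 {p : ℕ} (μ α : ℝ) (hμ : 0 < μ) (hα : 0 < α)
    (F : EuclideanSpace ℝ (Fin p) → ℝ)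
    (hFdiff : Differentiable ℝ F) (hsc : StrongConvexOn Set.univ μ F)
    (Wbar WF Wα : EuclideanSpace ℝ (Fin p))
    (hWF : IsMinOn F Set.univ WF)
    (hWα : IsMinOn (fun W => α * ‖W - Wbar‖ ^ 2 + F W) Set.univ Wα) :
    ‖Wα - WF‖ ≤ (2 * α / μ) * ‖Wbar - WF‖ := by
  set d : ℝ := ‖Wα - WF‖ with hd
  set A : ℝ := ‖Wbar - WF‖ with hA
  set c : ℝ := inner ℝ (Wα - Wbar) (WF - Wα) with hc
  have hd0 : 0 ≤ d := norm_nonneg _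
  have hA0 : 0 ≤ A := norm_nonneg _
  -- the strong convexity inequality along the segment
  have hseg : ∀ t : ℝ, t ∈ Set.Ioo (0:ℝ) 1 →
      F ((1 - t) • Wα + t • WF) ≤ (1 - t) * F Wα + t * F WF - (1 - t) * t * (μ / 2 * d ^ 2) := by
    intro t ht
    have := hsc.2 (Set.mem_univ Wα) (Set.mem_univ WF) (by linarith [ht.2] : (0:ℝ) ≤ 1 - t)
      ht.1.le (by ring)
    simpa [smul_eq_mul] using this
  have hIoo : Set.Ioo (0:ℝ) 1 ∈ nhdsWithin (0:ℝ) (Set.Ioi 0) :=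
    Ioo_mem_nhdsGT_of_mem ⟨le_refl _, one_pos⟩
  have hNB : (nhdsWithin (0:ℝ) (Set.Ioi 0)).NeBot := nhdsGT_neBot 0
  -- Step 1 : μ/2 d² ≤ F Wα - F WF
  have h1 : μ / 2 * d ^ 2 ≤ F Wα - F WF := by
    have key : ∀ t : ℝ, t ∈ Set.Ioo (0:ℝ) 1 →
        μ / 2 * (1 - t) * d ^ 2 ≤ F Wα - F WF := by
      intro t ht
      have hts : (1 - t) ∈ Set.Ioo (0:ℝ) 1 := ⟨by linarith [ht.2], by linarith [ht.1]⟩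
      have hsg := hseg (1 - t) hts
      have hmin := hWF (Set.mem_univ ((1 - (1 - t)) • Wα + (1 - t) • WF))
      have this1 : F WF ≤ (1 - (1 - t)) * F Wα + (1 - t) * F WF
          - (1 - (1 - t)) * (1 - t) * (μ / 2 * d ^ 2) := le_trans hmin hsg
      have ht1 : 0 < t := ht.1
      have hmul : t * (μ / 2 * (1 - t) * d ^ 2) ≤ t * (F Wα - F WF) := by nlinarith [this1]
      exact le_of_mul_le_mul_left hmul ht1
    have htend : Filter.Tendsto (fun t : ℝ => μ / 2 * (1 - t) * d ^ 2)
        (nhdsWithin (0:ℝ) (Set.Ioi 0)) (nhds (μ / 2 * d ^ 2)) := by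
      have : Filter.Tendsto (fun t : ℝ => μ / 2 * (1 - t) * d ^ 2) (nhds 0)
          (nhds (μ / 2 * (1 - 0) * d ^ 2)) := by
        apply Continuous.tendsto
        fun_prop
      simpa using this.mono_left nhdsWithin_le_nhds
    exact le_of_tendsto htend (Filter.eventually_iff_exists_mem.2
      ⟨Set.Ioo 0 1, hIoo, fun t ht => key t ht⟩)
  -- Step 2 : F Wα - F WF ≤ 2 α c - μ/2 d²
  have h2 : F Wα - F WF ≤ 2 * α * c - μ / 2 * d ^ 2 := by
    have key : ∀ t : ℝ, t ∈ Set.Ioo (0:ℝ) 1 →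
        F Wα - F WF ≤ 2 * α * c + α * t * d ^ 2 - μ / 2 * (1 - t) * d ^ 2 := by
      intro t ht
      have hmin := hWα (Set.mem_univ ((1 - t) • Wα + t • WF))
      simp only at hmin
      have hs := hseg t ht
      -- norm expansion
      have hexp : ‖((1 - t) • Wα + t • WF) - Wbar‖ ^ 2
          = ‖Wα - Wbar‖ ^ 2 + 2 * (t * c) + t ^ 2 * d ^ 2 := by
        have heq : ((1 - t) • Wα + t • WF) - Wbar = (Wα - Wbar) + t • (WF - Wα) := by
          module
        rw [heq, norm_add_sq_real, real_inner_smul_right, norm_smul]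
        have : ‖WF - Wα‖ = d := by rw [hd, norm_sub_rev]
        rw [this, Real.norm_eq_abs, abs_of_pos ht.1]
        ring
      have hmin' : α * ‖Wα - Wbar‖ ^ 2 + F Wα ≤
          α * (‖Wα - Wbar‖ ^ 2 + 2 * (t * c) + t ^ 2 * d ^ 2) +
            ((1 - t) * F Wα + t * F WF - (1 - t) * t * (μ / 2 * d ^ 2)) := by
        calc α * ‖Wα - Wbar‖ ^ 2 + F Wα
            ≤ α * ‖((1 - t) • Wα + t • WF) - Wbar‖ ^ 2 + F ((1 - t) • Wα + t • WF) := hmin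
          _ ≤ _ := by rw [hexp]; exact add_le_add_right hs _
      -- divide by t
      have ht1 : 0 < t := ht.1
      have hmul : t * (F Wα - F WF) ≤ t * (2 * α * c + α * t * d ^ 2 - μ / 2 * (1 - t) * d ^ 2) := by
        nlinarith [hmin']
      exact le_of_mul_le_mul_left (by linarith [hmul]) ht1
    have htend : Filter.Tendsto
        (fun t : ℝ => 2 * α * c + α * t * d ^ 2 - μ / 2 * (1 - t) * d ^ 2)
        (nhdsWithin (0:ℝ) (Set.Ioi 0)) (nhds (2 * α * c - μ / 2 * d ^ 2)) := by
      have : Filter.Tendsto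
          (fun t : ℝ => 2 * α * c + α * t * d ^ 2 - μ / 2 * (1 - t) * d ^ 2) (nhds 0)
          (nhds (2 * α * c + α * 0 * d ^ 2 - μ / 2 * (1 - 0) * d ^ 2)) := by
        apply Continuous.tendsto
        fun_prop
      simpa using this.mono_left nhdsWithin_le_nhds
    exact ge_of_tendsto htend (Filter.eventually_iff_exists_mem.2
      ⟨Set.Ioo 0 1, hIoo, fun t ht => key t ht⟩)
  -- combine
  have hμd : μ * d ^ 2 ≤ 2 * α * c := by linarith
  have hcval : c = inner ℝ (Wbar - WF) (Wα - WF) - d ^ 2 := by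
    have h1 : (Wα - Wbar : EuclideanSpace ℝ (Fin p)) = (Wα - WF) - (Wbar - WF) := by module
    have h2 : (WF - Wα : EuclideanSpace ℝ (Fin p)) = -(Wα - WF) := by module
    rw [hc, h1, h2, inner_sub_left, inner_neg_right, inner_neg_right,
      real_inner_self_eq_norm_sq]
    rw [real_inner_comm]
    ring
  have hinner : (inner ℝ (Wbar - WF) (Wα - WF) : ℝ) ≤ A * d := real_inner_le_norm _ _
  have hfin : μ * d ^ 2 ≤ 2 * α * (A * d) := by
    have : μ * d ^ 2 ≤ 2 * α * (A * d - d ^ 2) := by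
      calc μ * d ^ 2 ≤ 2 * α * c := hμd
        _ ≤ _ := by rw [hcval]; nlinarith [hinner]
    nlinarith
  rcases eq_or_lt_of_le hd0 with h | h
  · rw [← h]; positivity
  · rw [div_mul_eq_mul_div, le_div_iff₀ hμ]
    nlinarith [hfin, h]
end
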